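/- Let w_n ∈ R^d for n = 0,…,N satisfy the linear recurrence (I − L_{n+1}) w_{n+1} = (I + R_n) w_n with matrices L_n, R_n depending (differentiably) on a parameter θ ∈ R, and let J(θ) = Σ_{n=0}^{N} j_n(w_n). If λ_n ∈ R^d satisfy the adjoint system (I − L_N)ᵀ λ_N = −(∂j_N/∂w_N)ᵀ and (I − L_n)ᵀ λ_n = (I + R_n)ᵀ λ_{n+1} − (∂j_n/∂w_n)ᵀ for n = N−1,…,1 (and the n=0 equation similarly), then dJ/dθ = −Σ_{n=0}^{N−1} ⟨(∂L_{n+1}/∂θ) w_{n+1} + (∂R_n/∂θ) w_n, λ_{n+1}⟩. -/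

import Mathlib

open Matrix

private lemma clm_eq_dot {d : ℕ} (f : (Fin d → ℝ) →L[ℝ] ℝ) (v : Fin d → ℝ) :
    f v = dotProduct (fun i => f (Pi.single i 1)) v := by
  have hv : v = ∑ i, v i • (Pi.single i (1:ℝ) : Fin d → ℝ) := by
    funext k
    simp [Finset.sum_apply, Pi.single_apply]
  conv_lhs => rw [hv]
  rw [map_sum]
  simp [dotProduct, mul_comm]

private lemma dotT {d : ℕ} (A : Matrix (Fin d) (Fin d) ℝ) (v u : Fin d → ℝ) :
    dotProduct (Aᵀ.mulVec v) u = dotProduct v (A.mulVec u) := by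
  rw [Matrix.mulVec_transpose, Matrix.dotProduct_mulVec]
theorem discrete_adjoint_gradient (d N : ℕ) (hN : 0 < N)
    (L R : ℝ → ℕ → Matrix (Fin d) (Fin d) ℝ)
    (w : ℝ → ℕ → (Fin d → ℝ))
    (j : ℕ → (Fin d → ℝ) → ℝ)
    (lam : ℕ → (Fin d → ℝ))
    (θ₀ : ℝ)
    -- differentiability hypotheses
    (hjdiff : ∀ n, Differentiable ℝ (j n))
    (hwdiff : ∀ n, DifferentiableAt ℝ (fun θ => w θ n) θ₀)
    (hLdiff : ∀ n i k, DifferentiableAt ℝ (fun θ => L θ n i k) θ₀)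
    (hRdiff : ∀ n i k, DifferentiableAt ℝ (fun θ => R θ n i k) θ₀)
    -- the initial state does not depend on θ
    (hw0 : ∀ θ, w θ 0 = w θ₀ 0)
    -- invertibility of the implicit operators
    (hinv : ∀ θ n, IsUnit (1 - L θ n))
    -- the forward recurrence
    (hrec : ∀ θ, ∀ n < N, (1 - L θ (n + 1)).mulVec (w θ (n + 1)) =
        (1 + R θ n).mulVec (w θ n))
    -- terminal condition for the adjoint variables
    (hterm : (1 - L θ₀ N)ᵀ.mulVec (lam N) =
        -(fun i => fderiv ℝ (j N) (w θ₀ N) (Pi.single i 1)))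
    -- adjoint equations
    (hadj : ∀ n, 1 ≤ n → n < N →
      (1 - L θ₀ n)ᵀ.mulVec (lam n) =
        (1 + R θ₀ n)ᵀ.mulVec (lam (n + 1)) -
          (fun i => fderiv ℝ (j n) (w θ₀ n) (Pi.single i 1))) :
    deriv (fun θ => ∑ n ∈ Finset.range (N + 1), j n (w θ n)) θ₀ =
      -∑ n ∈ Finset.range N,
        dotProduct
          (fun i => (∑ k, deriv (fun θ => L θ (n + 1) i k) θ₀ * w θ₀ (n + 1) k) +
                    (∑ k, deriv (fun θ => R θ n i k) θ₀ * w θ₀ n k))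
          (lam (n + 1)) := by
  classical
  set w' : ℕ → Fin d → ℝ := fun n => deriv (fun θ => w θ n) θ₀ with hw'def
  have hwD : ∀ n, HasDerivAt (fun θ => w θ n) (w' n) θ₀ := fun n => (hwdiff n).hasDerivAt
  have hwDk : ∀ n k, HasDerivAt (fun θ => w θ n k) (w' n k) θ₀ := by
    intro n k
    exact (ContinuousLinearMap.proj (R := ℝ) (φ := fun _ : Fin d => ℝ) k).hasFDerivAt.comp_hasDerivAt θ₀ (hwD n)
  have hw'0 : w' 0 = 0 := by
    have h : (fun θ => w θ 0) = fun _ => w θ₀ 0 := funext hw0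
    simp [hw'def, h]
  set L' : ℕ → Matrix (Fin d) (Fin d) ℝ := fun n => Matrix.of fun i k => deriv (fun θ => L θ n i k) θ₀ with hL'
  set R' : ℕ → Matrix (Fin d) (Fin d) ℝ := fun n => Matrix.of fun i k => deriv (fun θ => R θ n i k) θ₀ with hR'
  set s : ℕ → Fin d → ℝ := fun n => (L' (n+1)).mulVec (w θ₀ (n+1)) + (R' n).mulVec (w θ₀ n) with hs
  set g : ℕ → Fin d → ℝ := fun n i => fderiv ℝ (j n) (w θ₀ n) (Pi.single i 1) with hg
  -- differentiated recurrence
  have hdrec : ∀ n < N, (1 - L θ₀ (n+1)).mulVec (w' (n+1)) = (1 + R θ₀ n).mulVec (w' n) + s n := by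
    intro n hn
    funext i
    have hLHS : HasDerivAt (fun θ => ∑ k, (1 - L θ (n+1)) i k * w θ (n+1) k)
        (∑ k, (-(deriv (fun θ => L θ (n+1) i k) θ₀) * w θ₀ (n+1) k
              + (1 - L θ₀ (n+1)) i k * w' (n+1) k)) θ₀ := by
      apply HasDerivAt.fun_sum
      intro k _
      have h1 : HasDerivAt (fun θ => (1 - L θ (n+1)) i k) (-(deriv (fun θ => L θ (n+1) i k) θ₀)) θ₀ := by
        have h2 : (fun θ => (1 - L θ (n+1)) i k)
            = fun θ => (1 : Matrix (Fin d) (Fin d) ℝ) i k - L θ (n+1) i k := rfl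
        rw [h2]
        simpa using ((hasDerivAt_const θ₀ ((1 : Matrix (Fin d) (Fin d) ℝ) i k)).fun_sub
          (hLdiff (n+1) i k).hasDerivAt)
      exact h1.mul (hwDk (n+1) k)
    have hRHS : HasDerivAt (fun θ => ∑ k, (1 + R θ n) i k * w θ n k)
        (∑ k, ((deriv (fun θ => R θ n i k) θ₀) * w θ₀ n k
              + (1 + R θ₀ n) i k * w' n k)) θ₀ := by
      apply HasDerivAt.fun_sum
      intro k _
      have h1 : HasDerivAt (fun θ => (1 + R θ n) i k) (deriv (fun θ => R θ n i k) θ₀) θ₀ := by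
        have h2 : (fun θ => (1 + R θ n) i k)
            = fun θ => (1 : Matrix (Fin d) (Fin d) ℝ) i k + R θ n i k := rfl
        rw [h2]
        simpa using ((hasDerivAt_const θ₀ ((1 : Matrix (Fin d) (Fin d) ℝ) i k)).fun_add
          (hRdiff n i k).hasDerivAt)
      exact h1.mul (hwDk n k)
    have hfun : (fun θ => ∑ k, (1 - L θ (n+1)) i k * w θ (n+1) k)
        = fun θ => ∑ k, (1 + R θ n) i k * w θ n k := by
      funext θ
      have h3 := congrFun (hrec θ n hn) i
      simpa [Matrix.mulVec, dotProduct] using h3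
    rw [hfun] at hLHS
    have heq := hLHS.unique hRHS
    have heq2 : (∑ k, -(deriv (fun θ => L θ (n+1) i k) θ₀) * w θ₀ (n+1) k)
        + ∑ k, (1 - L θ₀ (n+1)) i k * w' (n+1) k
        = (∑ k, (deriv (fun θ => R θ n i k) θ₀) * w θ₀ n k)
        + ∑ k, (1 + R θ₀ n) i k * w' n k := by
      rw [← Finset.sum_add_distrib, ← Finset.sum_add_distrib]
      exact heq
    have hneg : (∑ k, -(deriv (fun θ => L θ (n+1) i k) θ₀) * w θ₀ (n+1) k)
        = -∑ k, (deriv (fun θ => L θ (n+1) i k) θ₀) * w θ₀ (n+1) k := by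
      simp [neg_mul]
    rw [hneg] at heq2
    show ∑ k, (1 - L θ₀ (n+1)) i k * w' (n+1) k
        = (∑ k, (1 + R θ₀ n) i k * w' n k)
          + ((∑ k, L' (n+1) i k * w θ₀ (n+1) k) + ∑ k, R' n i k * w θ₀ n k)
    simp only [hL', hR', Matrix.of_apply]
    linarith [heq2]
  -- derivative of the objective
  have hderivJ : deriv (fun θ => ∑ n ∈ Finset.range (N + 1), j n (w θ n)) θ₀
      = ∑ n ∈ Finset.range (N+1), dotProduct (g n) (w' n) := by
    have h : HasDerivAt (fun θ => ∑ n ∈ Finset.range (N + 1), j n (w θ n))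
        (∑ n ∈ Finset.range (N+1), fderiv ℝ (j n) (w θ₀ n) (w' n)) θ₀ := by
      apply HasDerivAt.fun_sum
      intro n _
      exact ((hjdiff n (w θ₀ n)).hasFDerivAt.comp_hasDerivAt θ₀ (hwD n))
    rw [h.deriv]
    exact Finset.sum_congr rfl fun n _ => clm_eq_dot _ _
  -- summation by parts
  set b : ℕ → ℝ := fun n => dotProduct (lam n) ((1 - L θ₀ n).mulVec (w' n)) with hb
  set t : ℕ → ℝ := fun n => dotProduct (lam (n+1)) (s n) with ht
  set B : ℕ → ℝ := fun n => if n = 0 then 0 else b n with hB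
  have hstep : ∀ n < N, dotProduct (lam (n+1)) ((1 + R θ₀ n).mulVec (w' n)) = b (n+1) - t n := by
    intro n hn
    have h1 : (1 + R θ₀ n).mulVec (w' n) = (1 - L θ₀ (n+1)).mulVec (w' (n+1)) - s n := by
      rw [hdrec n hn]; abel
    rw [h1, dotProduct_sub]
  have key : ∀ n < N, dotProduct (g n) (w' n) = B (n+1) - B n - t n := by
    intro n hn
    rcases Nat.eq_zero_or_pos n with h0 | h1
    · subst h0
      have hz : dotProduct (g 0) (w' 0) = 0 := by rw [hw'0]; simp
      have h2 : dotProduct (lam 1) ((1 + R θ₀ 0).mulVec (w' 0)) = 0 := by rw [hw'0]; simp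
      have h3 := hstep 0 hn
      rw [h2] at h3
      rw [hz]
      simp only [hB]
      norm_num
      linarith [h3]
    · have hadj' := hadj n h1 hn
      have hgn : g n = (1 + R θ₀ n)ᵀ.mulVec (lam (n+1)) - (1 - L θ₀ n)ᵀ.mulVec (lam n) := by
        rw [hadj']; abel
      rw [hgn, sub_dotProduct, dotT, dotT, hstep n hn]
      have hn1 : B (n+1) = b (n+1) := by simp [hB]
      have hn2 : B n = b n := by simp [hB, Nat.one_le_iff_ne_zero.mp h1]
      rw [hn1, hn2]
      ring
  have hcN : dotProduct (g N) (w' N) = -b N := by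
    have hgN : g N = -((1 - L θ₀ N)ᵀ.mulVec (lam N)) := by
      rw [hterm]; simp [hg]
    rw [hgN, neg_dotProduct, dotT]
  rw [hderivJ, Finset.sum_range_succ, hcN]
  have hsum1 : ∑ n ∈ Finset.range N, dotProduct (g n) (w' n)
      = ∑ n ∈ Finset.range N, (B (n+1) - B n - t n) :=
    Finset.sum_congr rfl fun n hn => key n (Finset.mem_range.mp hn)
  rw [hsum1]
  have hsum2 : ∑ n ∈ Finset.range N, (B (n+1) - B n - t n)
      = (B N - B 0) - ∑ n ∈ Finset.range N, t n := by
    rw [Finset.sum_sub_distrib, Finset.sum_range_sub]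
  rw [hsum2]
  have hBN : B N = b N := by simp [hB, hN.ne']
  have hB0 : B 0 = 0 := by simp [hB]
  rw [hBN, hB0]
  have hts : ∑ n ∈ Finset.range N, t n
      = ∑ n ∈ Finset.range N,
        dotProduct
          (fun i => (∑ k, deriv (fun θ => L θ (n + 1) i k) θ₀ * w θ₀ (n + 1) k) +
                    (∑ k, deriv (fun θ => R θ n i k) θ₀ * w θ₀ n k))
          (lam (n + 1)) := by
    refine Finset.sum_congr rfl fun n _ => ?_
    rw [ht, dotProduct_comm]
    congr 1
  rw [← hts]
  ring
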